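/- Let q = 5^a, let K be an algebraic closure of ℚ_5 with valuation ord_5 normalized by ord_5(5) = 1, and ord_q := (1/a)·ord_5. Let α_1, …, α_6 ∈ K be nonzero and set P(T) = ∏_{i=1}^6 (1 − α_i T) = 1 + b_1 T + ⋯ + b_6 T^6. Assume: (i) the multiset {α_1, …, α_6} is stable under α ↦ q/α; (ii) every vertex of the Newton polygon of P (the lower convex hull of the points (n, ord_q b_n), 0 ≤ n ≤ 6, with b_0 = 1) has ordinate an integer multiple of 1/4; (iii) ord_q(b_1) > 5/12, ord_q(b_2) > 5/6, and ord_q(b_3) > 5/4. Then ord_q(α_i) = 1/2 for all i = 1, …, 6. -/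

import Mathlib

open scoped BigOperators

local instance fact5 : Fact (Nat.Prime 5) := ⟨by norm_num⟩

section AuxVal

variable {K : Type*} [Field K]

lemma v_one (v : K → WithTop ℝ) (hv0 : ∀ x, v x = ⊤ ↔ x = 0)
    (hv_mul : ∀ x y, v (x * y) = v x + v y) : v 1 = 0 := by
  have h1 : v (1:K) ≠ ⊤ := fun h => one_ne_zero ((hv0 1).1 h)
  obtain ⟨r, hr⟩ := WithTop.ne_top_iff_exists.1 h1
  have := hv_mul 1 1
  rw [mul_one, ← hr, ← WithTop.coe_add] at this
  have h2 : r = r + r := by exact_mod_cast this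
  have h3 : r = 0 := by linarith
  rw [← hr, h3]; rfl

lemma v_neg (v : K → WithTop ℝ) (hv0 : ∀ x, v x = ⊤ ↔ x = 0)
    (hv_mul : ∀ x y, v (x * y) = v x + v y) (x : K) : v (-x) = v x := by
  have hm1 : v (-1 : K) = 0 := by
    have h1 : v (-1 : K) ≠ ⊤ := fun h => by
      have := (hv0 (-1)).1 h; norm_num at this
    obtain ⟨r, hr⟩ := WithTop.ne_top_iff_exists.1 h1
    have := hv_mul (-1) (-1)
    rw [neg_mul_neg, one_mul, v_one v hv0 hv_mul, ← hr, ← WithTop.coe_add] at this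
    have h0 : r + r = 0 := by exact_mod_cast this.symm
    have h3 : r = 0 := by linarith
    rw [← hr, h3]; rfl
  calc v (-x) = v ((-1) * x) := by rw [neg_one_mul]
    _ = v (-1) + v x := hv_mul _ _
    _ = v x := by rw [hm1, zero_add]

lemma v_prod (v : K → WithTop ℝ) (hv0 : ∀ x, v x = ⊤ ↔ x = 0)
    (hv_mul : ∀ x y, v (x * y) = v x + v y)
    {ι : Type*} (t : Finset ι) (f : ι → K) (w : ι → ℝ)
    (hw : ∀ i ∈ t, v (f i) = (w i : WithTop ℝ)) :
    v (∏ i ∈ t, f i) = ((∑ i ∈ t, w i : ℝ) : WithTop ℝ) := by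
  classical
  induction t using Finset.induction with
  | empty => simpa using v_one v hv0 hv_mul
  | @insert a s ha ih =>
    rw [Finset.prod_insert ha, hv_mul, hw a (Finset.mem_insert_self a s),
      ih (fun i hi => hw i (Finset.mem_insert_of_mem hi)), Finset.sum_insert ha,
      ← WithTop.coe_add]

lemma v_sum_ge (v : K → WithTop ℝ) (hv0 : ∀ x, v x = ⊤ ↔ x = 0)
    (hv_add : ∀ x y, min (v x) (v y) ≤ v (x + y))
    {ι : Type*} (t : Finset ι) (f : ι → K) (c : WithTop ℝ)
    (h : ∀ i ∈ t, c ≤ v (f i)) : c ≤ v (∑ i ∈ t, f i) := by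
  classical
  induction t using Finset.induction with
  | empty => simp [(hv0 0).2 rfl]
  | @insert a s ha ih =>
    rw [Finset.sum_insert ha]
    refine le_trans ?_ (hv_add _ _)
    exact le_min (h a (Finset.mem_insert_self a s))
      (ih fun i hi => h i (Finset.mem_insert_of_mem hi))

lemma v_sum_gt (v : K → WithTop ℝ) (hv0 : ∀ x, v x = ⊤ ↔ x = 0)
    (hv_add : ∀ x y, min (v x) (v y) ≤ v (x + y))
    {ι : Type*} (t : Finset ι) (f : ι → K) (c : ℝ)
    (h : ∀ i ∈ t, (c : WithTop ℝ) < v (f i)) : (c : WithTop ℝ) < v (∑ i ∈ t, f i) := by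
  classical
  induction t using Finset.induction with
  | empty =>
    simp only [Finset.sum_empty]
    rw [(hv0 0).2 rfl]
    exact WithTop.coe_lt_top c
  | @insert a s ha ih =>
    rw [Finset.sum_insert ha]
    refine lt_of_lt_of_le ?_ (hv_add _ _)
    exact lt_min (h a (Finset.mem_insert_self a s))
      (ih fun i hi => h i (Finset.mem_insert_of_mem hi))

lemma v_add_eq (v : K → WithTop ℝ) (hv0 : ∀ x, v x = ⊤ ↔ x = 0)
    (hv_mul : ∀ x y, v (x * y) = v x + v y)
    (hv_add : ∀ x y, min (v x) (v y) ≤ v (x + y))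
    (x y : K) (hxy : v x < v y) : v (x + y) = v x := by
  have h1 : v x ≤ v (x + y) := by
    have := hv_add x y
    rwa [min_eq_left hxy.le] at this
  have h2 : v (x + y) ≤ v x := by
    by_contra h
    push_neg at h
    have h3 := hv_add (x + y) (-y)
    rw [add_neg_cancel_right, v_neg v hv0 hv_mul] at h3
    have : v x < min (v (x + y)) (v y) := lt_min h hxy
    exact absurd h3 (not_le.2 this)
  exact le_antisymm h2 h1

lemma coeff_prod_one_add {R ι : Type*} [CommRing R] [DecidableEq ι] (s : Finset ι) (f : ι → R) :
    ∀ n : ℕ, (∏ i ∈ s, (1 + Polynomial.C (f i) * Polynomial.X)).coeff n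
      = ∑ t ∈ s.powersetCard n, ∏ i ∈ t, f i := by
  induction s using Finset.induction with
  | empty =>
    intro n
    cases n with
    | zero => simp
    | succ n =>
      rw [Finset.powersetCard_eq_empty.2 (by simp)]
      simp [Polynomial.coeff_one]
  | @insert a s ha ih =>
    intro n
    rw [Finset.prod_insert ha, add_mul, one_mul]
    cases n with
    | zero =>
      simp [Polynomial.coeff_zero_eq_eval_zero, Polynomial.eval_prod, ih 0]
    | succ n =>
      rw [Polynomial.coeff_add, ih (n+1), mul_assoc, Polynomial.coeff_C_mul,
        Polynomial.coeff_X_mul, ih n, Finset.powersetCard_succ_insert ha,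
        Finset.sum_union, Finset.sum_image]
      · congr 1
        rw [Finset.mul_sum]
        apply Finset.sum_congr rfl
        intro t ht
        rw [Finset.mem_powersetCard] at ht
        rw [Finset.prod_insert (fun h => ha (ht.1 h))]
      · intro t ht u hu htu
        rw [Finset.mem_coe, Finset.mem_powersetCard] at ht hu
        have h1 : a ∉ t := fun h => ha (ht.1 h)
        have h2 : a ∉ u := fun h => ha (hu.1 h)
        rw [← Finset.erase_insert h1, ← Finset.erase_insert h2, htu]
      · rw [Finset.disjoint_right]
        intro t ht hts
        simp only [Finset.mem_image] at ht
        obtain ⟨u, hu, rfl⟩ := ht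
        rw [Finset.mem_powersetCard] at hts
        exact ha (hts.1 (Finset.mem_insert_self a u))

end AuxVal

/-- Value at `x` of the lower convex hull (Newton polygon) of the points
`(n, pts n)`, `0 ≤ n ≤ d`, where `pts n ∈ ℝ ∪ {+∞}`. -/
noncomputable def npVal (d : ℕ) (pts : ℕ → WithTop ℝ) (x : ℝ) : ℝ :=
  sSup {y : ℝ | ∃ m c : ℝ,
    (∀ n ∈ Finset.range (d + 1), ((m * n + c : ℝ) : WithTop ℝ) ≤ pts n) ∧
    y = m * x + c}

/-- `(n, npVal d pts n)` is a vertex of the Newton polygon of the points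
`(k, pts k)`, `0 ≤ k ≤ d`. -/
def IsNPVertex (d : ℕ) (pts : ℕ → WithTop ℝ) (n : ℕ) : Prop :=
  n ≤ d ∧ ∃ m c : ℝ,
    (∀ k ∈ Finset.range (d + 1), ((m * k + c : ℝ) : WithTop ℝ) ≤ pts k) ∧
    (m * n + c : ℝ) = npVal d pts n ∧
    ∀ k ≤ d, k ≠ n → (m * k + c : ℝ) < npVal d pts k

set_option maxHeartbeats 4000000 in
theorem newton_polygon_forces_supersingular_five
    (v : AlgebraicClosure ℚ_[5] → WithTop ℝ)
    (hv0 : ∀ x, v x = ⊤ ↔ x = 0)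
    (hv_mul : ∀ x y, v (x * y) = v x + v y)
    (hv_add : ∀ x y, min (v x) (v y) ≤ v (x + y))
    (hv_ext : ∀ x : ℚ_[5], x ≠ 0 →
      v (algebraMap ℚ_[5] (AlgebraicClosure ℚ_[5]) x) = ((x.valuation : ℝ) : WithTop ℝ))
    (a : ℕ) (ha : 0 < a)
    (α : Fin 6 → AlgebraicClosure ℚ_[5]) (hα : ∀ i, α i ≠ 0)
    -- `ord_q := (1/a)·ord_5`
    (ordq : AlgebraicClosure ℚ_[5] → WithTop ℝ)
    (hordq : ∀ x, ordq x = WithTop.map (fun t => t / (a : ℝ)) (v x))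
    -- the coefficients of `P(T) = ∏ᵢ (1 − αᵢ T)`
    (b : ℕ → AlgebraicClosure ℚ_[5])
    (hb : ∀ n, b n =
      (∏ i, (1 - Polynomial.C (α i) * Polynomial.X)).coeff n)
    -- (i) the multiset of the reciprocal roots is stable under `α ↦ q/α`
    (hsym : (Finset.univ.val.map α).map
        (fun x => ((5 : AlgebraicClosure ℚ_[5]) ^ a) / x) = Finset.univ.val.map α)
    -- (ii) every vertex of the Newton polygon has ordinate a multiple of 1/4
    (hvert : ∀ n : ℕ, IsNPVertex 6 (fun k => ordq (b k)) n →
      ∃ z : ℤ, npVal 6 (fun k => ordq (b k)) (n : ℝ) = (z : ℝ) / 4)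
    -- (iii)
    (hb1 : ((5 / 12 : ℝ) : WithTop ℝ) < ordq (b 1))
    (hb2 : ((5 / 6 : ℝ) : WithTop ℝ) < ordq (b 2))
    (hb3 : ((5 / 4 : ℝ) : WithTop ℝ) < ordq (b 3)) :
    ∀ i, ordq (α i) = ((1 / 2 : ℝ) : WithTop ℝ) := by
  classical
  have haR : (0:ℝ) < (a:ℝ) := by exact_mod_cast ha
  -- the real values u i of the roots
  have hune : ∀ i, v (α i) ≠ ⊤ := fun i h => hα i ((hv0 _).1 h)
  have hexu : ∀ i, ∃ r : ℝ, v (α i) = (r : WithTop ℝ) := fun i =>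
    WithTop.ne_top_iff_exists.1 (hune i) |>.imp fun r h => h.symm
  choose u hu using hexu
  -- v 5 = 1 and v (5^a) = a
  have hv5 : v (5 : AlgebraicClosure ℚ_[5]) = ((1:ℝ) : WithTop ℝ) := by
    have h50 : (5 : ℚ_[5]) ≠ 0 := by norm_num
    have h := hv_ext 5 h50
    rw [map_ofNat] at h
    have hval : ((5:ℚ_[5])).valuation = 1 := by
      have := @Padic.valuation_p 5 fact5
      simpa using this
    rw [h, hval]
    norm_num
  have hvq : v ((5 : AlgebraicClosure ℚ_[5]) ^ a) = ((a:ℝ) : WithTop ℝ) := by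
    have : ((5 : AlgebraicClosure ℚ_[5]) ^ a) = ∏ _i ∈ Finset.range a, (5 : AlgebraicClosure ℚ_[5]) := by
      rw [Finset.prod_const, Finset.card_range]
    rw [this, v_prod v hv0 hv_mul _ _ (fun _ => (1:ℝ)) (fun i _ => hv5)]
    simp
  -- ord of q/α i
  have hvinv : ∀ i, v ((α i)⁻¹) = ((-u i : ℝ) : WithTop ℝ) := by
    intro i
    have h0 := hv_mul (α i) (α i)⁻¹
    rw [mul_inv_cancel₀ (hα i), v_one v hv0 hv_mul, hu i] at h0
    have hne : v ((α i)⁻¹) ≠ ⊤ := fun h => by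
      rw [h] at h0; simp at h0
    obtain ⟨r, hr⟩ := WithTop.ne_top_iff_exists.1 hne
    rw [← hr, ← WithTop.coe_add] at h0
    have : u i + r = 0 := by exact_mod_cast h0.symm
    have hr2 : r = -u i := by linarith
    rw [← hr, hr2]
  have hvdiv : ∀ i, v ((5 : AlgebraicClosure ℚ_[5])^a / α i) = (((a:ℝ) - u i : ℝ) : WithTop ℝ) := by
    intro i
    rw [div_eq_mul_inv, hv_mul, hvq, hvinv, ← WithTop.coe_add]
    norm_num [sub_eq_add_neg]
  -- multiset symmetry on the real values
  have hM : Multiset.map (fun i => (a:ℝ) - u i) Finset.univ.val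
      = Multiset.map u Finset.univ.val := by
    have h1 := congrArg (Multiset.map v) hsym
    rw [Multiset.map_map, Multiset.map_map, Multiset.map_map] at h1
    have h2 : Multiset.map (fun i => v ((5 : AlgebraicClosure ℚ_[5])^a / α i)) Finset.univ.val
        = Multiset.map (fun i => v (α i)) Finset.univ.val := h1
    rw [show (fun i => v ((5 : AlgebraicClosure ℚ_[5])^a / α i)) = (fun i => (((a:ℝ) - u i : ℝ) : WithTop ℝ)) from
        funext fun i => hvdiv i,
      show (fun i => v (α i)) = (fun i => ((u i : ℝ) : WithTop ℝ)) from funext fun i => hu i]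
      at h2
    have h3 : Multiset.map ((fun r : ℝ => (r : WithTop ℝ)) ∘ (fun i => (a:ℝ) - u i))
        Finset.univ.val = Multiset.map ((fun r : ℝ => (r : WithTop ℝ)) ∘ u)
        Finset.univ.val := by
      rw [← Multiset.map_map, ← Multiset.map_map] at *
      exact h2
    have h4 : Multiset.map (fun r : ℝ => (r : WithTop ℝ))
        (Multiset.map (fun i => (a:ℝ) - u i) Finset.univ.val)
        = Multiset.map (fun r : ℝ => (r : WithTop ℝ)) (Multiset.map u Finset.univ.val) := by
      rw [Multiset.map_map, Multiset.map_map]; exact h3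
    exact Multiset.map_injective WithTop.coe_injective h4
  -- minimum of the u i
  have himg : (Finset.image u Finset.univ).Nonempty :=
    ⟨u 0, Finset.mem_image_of_mem u (Finset.mem_univ 0)⟩
  set sv := (Finset.image u Finset.univ).min' himg with hsv_def
  have hsv_le : ∀ i, sv ≤ u i := fun i =>
    Finset.min'_le _ _ (Finset.mem_image_of_mem u (Finset.mem_univ i))
  obtain ⟨i₀, -, hi₀⟩ := Finset.mem_image.1 ((Finset.image u Finset.univ).min'_mem himg)
  have hmem : ∀ i, ∃ j, u j = (a:ℝ) - u i := by
    intro i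
    have hmm : ((a:ℝ) - u i) ∈ Multiset.map u Finset.univ.val := by
      rw [← hM]
      exact Multiset.mem_map.2 ⟨i, Finset.mem_univ_val i, rfl⟩
    obtain ⟨j, -, hj⟩ := Multiset.mem_map.1 hmm
    exact ⟨j, hj⟩
  have hs2 : (a:ℝ) ≤ 2 * sv := by
    by_contra hlt
    push_neg at hlt
    have hsva : sv < (a:ℝ)/2 := by linarith
    -- the set of indices realizing the minimum
    set A := Finset.univ.filter (fun i : Fin 6 => sv = u i) with hA_def
    set k := A.card with hk_def
    have hi₀A : i₀ ∈ A := Finset.mem_filter.2 ⟨Finset.mem_univ _, hi₀.symm⟩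
    have hk1 : 1 ≤ k := Finset.card_pos.2 ⟨i₀, hi₀A⟩
    set B := Finset.univ.filter (fun i : Fin 6 => sv = (a:ℝ) - u i) with hB_def
    have hcard : A.card = B.card := by
      have c1 : Multiset.count sv (Multiset.map u Finset.univ.val)
          = Multiset.card (Finset.univ.val.filter (fun i => sv = u i)) :=
        Multiset.count_map _ _ _
      have c2 : Multiset.count sv (Multiset.map (fun i => (a:ℝ) - u i) Finset.univ.val)
          = Multiset.card (Finset.univ.val.filter (fun i => sv = (a:ℝ) - u i)) :=
        Multiset.count_map _ _ _
      rw [hM, c1] at c2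
      rw [hA_def, hB_def, Finset.card_def, Finset.card_def, Finset.filter_val,
        Finset.filter_val, ← c2]
    have hABdisj : Disjoint A B := by
      rw [Finset.disjoint_left]
      intro i hiA hiB
      have h1 := (Finset.mem_filter.1 hiA).2
      have h2 := (Finset.mem_filter.1 hiB).2
      have : (a:ℝ) = 2 * sv := by linarith
      linarith
    have hk3 : k ≤ 3 := by
      have hle := Finset.card_le_card (Finset.subset_univ (A ∪ B))
      rw [Finset.card_union_of_disjoint hABdisj, Finset.card_univ] at hle
      simp only [Fintype.card_fin] at hle
      omega
    -- second smallest value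
    have hsd : ((Finset.univ : Finset (Fin 6)) \ A).Nonempty := by
      rw [Finset.sdiff_nonempty]
      intro hsub
      have := Finset.card_le_card hsub
      rw [Finset.card_univ] at this
      simp only [Fintype.card_fin] at this
      omega
    have himgB : ((Finset.univ \ A).image u).Nonempty := hsd.image u
    set s' := ((Finset.univ \ A).image u).min' himgB with hs'_def
    have hs'le : ∀ i, i ∉ A → s' ≤ u i := fun i hi =>
      Finset.min'_le _ _ (Finset.mem_image_of_mem u (Finset.mem_sdiff.2 ⟨Finset.mem_univ i, hi⟩))
    have hs'gt : sv < s' := by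
      rw [hs'_def]
      obtain ⟨j, hjmem, hj⟩ := Finset.mem_image.1 (((Finset.univ \ A).image u).min'_mem himgB)
      have hjA : j ∉ A := (Finset.mem_sdiff.1 hjmem).2
      have hne : sv ≠ u j := fun h => hjA (Finset.mem_filter.2 ⟨Finset.mem_univ _, h⟩)
      rw [← hj]
      exact lt_of_le_of_ne (hsv_le j) hne
    -- sums over subsets
    have hsum_ge : ∀ t : Finset (Fin 6), (t.card : ℝ) * sv ≤ ∑ i ∈ t, u i := by
      intro t
      have := Finset.card_nsmul_le_sum t u sv (fun i _ => hsv_le i)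
      rwa [nsmul_eq_mul] at this
    have hsum_split : ∀ t : Finset (Fin 6),
        ((t ∩ A).card : ℝ) * sv + ((t \ A).card : ℝ) * s' ≤ ∑ i ∈ t, u i := by
      intro t
      rw [← Finset.sum_inter_add_sum_sdiff t A u]
      have h1 := Finset.card_nsmul_le_sum (t ∩ A) u sv (fun i _ => hsv_le i)
      have h2 := Finset.card_nsmul_le_sum (t \ A) u s'
        (fun i hi => hs'le i (Finset.mem_sdiff.1 hi).2)
      rw [nsmul_eq_mul] at h1 h2
      linarith
    have hsumA : ∑ i ∈ A, u i = (k:ℝ) * sv := by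
      calc ∑ i ∈ A, u i = ∑ _i ∈ A, sv :=
            Finset.sum_congr rfl (fun i hi => ((Finset.mem_filter.1 hi).2).symm)
        _ = (k:ℝ) * sv := by rw [Finset.sum_const, nsmul_eq_mul]
    have hF2 : ∀ t : Finset (Fin 6), t.card = k → t ≠ A → (k:ℝ) * sv < ∑ i ∈ t, u i := by
      intro t htc htne
      have hdne : (t \ A).Nonempty := by
        rw [Finset.sdiff_nonempty]
        intro hsub
        exact htne (Finset.eq_of_subset_of_card_le hsub (by omega))
      have hd1 : 1 ≤ (t \ A).card := Finset.card_pos.2 hdne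
      have hsplit := hsum_split t
      have hcards : (t ∩ A).card + (t \ A).card = t.card := Finset.card_inter_add_card_sdiff t A
      have h1 : ((t ∩ A).card : ℝ) + ((t \ A).card : ℝ) = (k:ℝ) := by
        rw [htc] at hcards
        exact_mod_cast hcards
      have hd1R : (1:ℝ) ≤ ((t \ A).card : ℝ) := by exact_mod_cast hd1
      nlinarith [hs'gt]
    have hF3 : ∀ t : Finset (Fin 6), k ≤ t.card →
        (k:ℝ)*sv + ((t.card:ℝ) - (k:ℝ))*s' ≤ ∑ i ∈ t, u i := by
      intro t htk
      have hsplit := hsum_split t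
      have hcards : (t ∩ A).card + (t \ A).card = t.card := Finset.card_inter_add_card_sdiff t A
      have hpk : (t ∩ A).card ≤ k := hk_def ▸ Finset.card_le_card Finset.inter_subset_right
      have e1 : ((t ∩ A).card:ℝ) + ((t \ A).card:ℝ) = (t.card:ℝ) := by exact_mod_cast hcards
      have e2 : ((t ∩ A).card:ℝ) ≤ (k:ℝ) := by exact_mod_cast hpk
      nlinarith [hs'gt.le]
    -- coefficients as sums over subsets
    have hbn : ∀ n, b n = ∑ t ∈ (Finset.univ : Finset (Fin 6)).powersetCard n,
        ∏ i ∈ t, (-α i) := by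
      intro n
      have hpr : (∏ i, (1 - Polynomial.C (α i) * Polynomial.X))
          = ∏ i, (1 + Polynomial.C (-α i) * Polynomial.X) :=
        Finset.prod_congr rfl (fun i _ => by rw [map_neg]; ring)
      rw [hb n, hpr, coeff_prod_one_add]
    have hterm : ∀ t : Finset (Fin 6), v (∏ i ∈ t, -α i)
        = ((∑ i ∈ t, u i : ℝ) : WithTop ℝ) :=
      fun t => v_prod v hv0 hv_mul t _ u (fun i _ => by rw [v_neg v hv0 hv_mul, hu i])
    have hAmem : A ∈ (Finset.univ : Finset (Fin 6)).powersetCard k :=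
      Finset.mem_powersetCard.2 ⟨Finset.subset_univ A, rfl⟩
    have hvbk : v (b k) = (((k:ℝ) * sv : ℝ) : WithTop ℝ) := by
      rw [hbn k, ← Finset.add_sum_erase _ _ hAmem]
      have hx : v (∏ i ∈ A, -α i) = (((k:ℝ)*sv : ℝ) : WithTop ℝ) := by
        rw [hterm A, hsumA]
      have hy : (((k:ℝ)*sv : ℝ) : WithTop ℝ)
          < v (∑ t ∈ ((Finset.univ : Finset (Fin 6)).powersetCard k).erase A,
              ∏ i ∈ t, -α i) := by
        apply v_sum_gt v hv0 hv_add
        intro t ht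
        obtain ⟨htne, htmem⟩ := Finset.mem_erase.1 ht
        rw [hterm t]
        exact WithTop.coe_lt_coe.2 (hF2 t (Finset.mem_powersetCard.1 htmem).2 htne)
      rw [v_add_eq v hv0 hv_mul hv_add _ _ (by rw [hx]; exact hy), hx]
    have hvbn_ge : ∀ n : ℕ, (((n:ℝ) * sv : ℝ) : WithTop ℝ) ≤ v (b n) := by
      intro n
      rw [hbn n]
      apply v_sum_ge v hv0 hv_add
      intro t ht
      rw [hterm t]
      have htc := (Finset.mem_powersetCard.1 ht).2
      exact WithTop.coe_le_coe.2 (by rw [← htc]; exact hsum_ge t)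
    have hvbn_ge' : ∀ n : ℕ, k ≤ n →
        ((((k:ℝ)*sv + ((n:ℝ)-(k:ℝ))*s' : ℝ)) : WithTop ℝ) ≤ v (b n) := by
      intro n hkn
      rw [hbn n]
      apply v_sum_ge v hv0 hv_add
      intro t ht
      rw [hterm t]
      have htc := (Finset.mem_powersetCard.1 ht).2
      have hkt : k ≤ t.card := by rw [htc]; exact hkn
      have h5 := hF3 t hkt
      rw [htc] at h5
      exact WithTop.coe_le_coe.2 h5
    have hvb0 : v (b 0) = ((0:ℝ) : WithTop ℝ) := by
      rw [hbn 0, Finset.powersetCard_zero, Finset.sum_singleton, Finset.prod_empty]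
      exact v_one v hv0 hv_mul
    have hvb6 : v (b 6) = ((∑ i, u i : ℝ) : WithTop ℝ) := by
      have h6 : ((Finset.univ : Finset (Fin 6))).card = 6 := by simp
      have hps := Finset.powersetCard_self (Finset.univ : Finset (Fin 6))
      rw [h6] at hps
      rw [hbn 6, hps, Finset.sum_singleton, hterm]
    -- pass to ord_q
    have hordq_coe : ∀ (x : AlgebraicClosure ℚ_[5]) (r : ℝ), v x = (r : WithTop ℝ) →
        ordq x = ((r / (a:ℝ) : ℝ) : WithTop ℝ) := by
      intro x r h
      rw [hordq x, h, WithTop.map_coe]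
    have hordq_ge : ∀ (x : AlgebraicClosure ℚ_[5]) (c : ℝ),
        ((c * (a:ℝ) : ℝ) : WithTop ℝ) ≤ v x → ((c : ℝ) : WithTop ℝ) ≤ ordq x := by
      intro x c h
      rw [hordq x]
      rcases eq_or_ne (v x) ⊤ with h' | h'
      · rw [h']; simp
      · obtain ⟨r, hr⟩ := WithTop.ne_top_iff_exists.1 h'
        rw [← hr, WithTop.map_coe]
        rw [← hr] at h
        have h2 : c * (a:ℝ) ≤ r := WithTop.coe_le_coe.1 h
        exact WithTop.coe_le_coe.2 ((le_div_iff₀ haR).2 h2)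
    set sq := sv / (a:ℝ) with hsq_def
    set s'q := s' / (a:ℝ) with hs'q_def
    have hsqs' : sq < s'q := by
      rw [hsq_def, hs'q_def, div_lt_div_iff₀ haR haR]
      nlinarith
    have hsq2 : sq < 1/2 := by
      rw [hsq_def, div_lt_iff₀ haR]; linarith
    have Pk : ordq (b k) = (((k:ℝ) * sq : ℝ) : WithTop ℝ) := by
      have he : (k:ℝ)*sv/(a:ℝ) = (k:ℝ) * sq := by rw [hsq_def, mul_div_assoc]
      rw [hordq_coe _ _ hvbk, he]
    have Pge : ∀ n : ℕ, (((n:ℝ) * sq : ℝ) : WithTop ℝ) ≤ ordq (b n) := by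
      intro n
      apply hordq_ge
      have he : (n:ℝ) * sq * (a:ℝ) = (n:ℝ) * sv := by
        rw [hsq_def]; field_simp
      rw [he]
      exact hvbn_ge n
    have Pge' : ∀ n : ℕ, k ≤ n →
        ((((k:ℝ)*sq + ((n:ℝ)-(k:ℝ))*s'q : ℝ)) : WithTop ℝ) ≤ ordq (b n) := by
      intro n hkn
      apply hordq_ge
      have he : ((k:ℝ)*sq + ((n:ℝ)-(k:ℝ))*s'q) * (a:ℝ) = (k:ℝ)*sv + ((n:ℝ)-(k:ℝ))*s' := by
        rw [hsq_def, hs'q_def]; field_simp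
      rw [he]
      exact hvbn_ge' n hkn
    have P0 : ordq (b 0) = ((0:ℝ) : WithTop ℝ) := by
      rw [hordq_coe _ _ hvb0]
      norm_num
    set p6 := (∑ i, u i) / (a:ℝ) with hp6_def
    have P6 : ordq (b 6) = ((p6 : ℝ) : WithTop ℝ) := hordq_coe _ _ hvb6
    -- admissible lines
    have hadm_sq : ∀ n ∈ Finset.range 7, ((sq * (n:ℝ) + 0 : ℝ) : WithTop ℝ) ≤ ordq (b n) := by
      intro n _
      exact le_trans (WithTop.coe_le_coe.2 (le_of_eq (by ring))) (Pge n)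
    have hadm_gen : ∀ m : ℝ, sq ≤ m → m ≤ s'q → ∀ n ∈ Finset.range 7,
        ((m * (n:ℝ) + ((k:ℝ)*sq - m*(k:ℝ)) : ℝ) : WithTop ℝ) ≤ ordq (b n) := by
      intro m hm1 hm2 n _
      rcases le_or_gt n k with h | h
      · have hnk : (n:ℝ) ≤ (k:ℝ) := by exact_mod_cast h
        refine le_trans (WithTop.coe_le_coe.2 ?_) (Pge n)
        nlinarith
      · have hkn : (k:ℝ) ≤ (n:ℝ) := by exact_mod_cast h.le
        refine le_trans (WithTop.coe_le_coe.2 ?_) (Pge' n h.le)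
        nlinarith
    -- bounded above
    have hbdd : ∀ x : ℝ, 0 ≤ x → x ≤ 6 → BddAbove {y : ℝ | ∃ m c : ℝ,
        (∀ n ∈ Finset.range (6+1), ((m * (n:ℝ) + c : ℝ) : WithTop ℝ) ≤ ordq (b n)) ∧
        y = m * x + c} := by
      intro x hx0 hx6
      refine ⟨max 0 p6, ?_⟩
      rintro y ⟨m, c, hadm, rfl⟩
      have e0 : m * ((0:ℕ):ℝ) + c ≤ 0 := by
        have h := hadm 0 (Finset.mem_range.mpr (by norm_num))
        rw [P0] at h
        exact WithTop.coe_le_coe.1 h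
      have e6 : m * ((6:ℕ):ℝ) + c ≤ p6 := by
        have h := hadm 6 (Finset.mem_range.mpr (by norm_num))
        rw [P6] at h
        exact WithTop.coe_le_coe.1 h
      push_cast at e0 e6
      rcases le_or_gt m 0 with hm | hm
      · have hx : m * x + c ≤ m * 0 + c := by nlinarith
        calc m * x + c ≤ m * 0 + c := hx
          _ ≤ 0 := by linarith
          _ ≤ max 0 p6 := le_max_left _ _
      · have hx : m * x + c ≤ m * 6 + c := by nlinarith
        calc m * x + c ≤ m * 6 + c := hx
          _ ≤ p6 := by linarith
          _ ≤ max 0 p6 := le_max_right _ _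
    have hk7 : k ∈ Finset.range 7 := by rw [Finset.mem_range]; omega
    have hk6R : ((k:ℕ):ℝ) ≤ 6 := by
      have : (k:ℕ) ≤ 6 := by omega
      exact_mod_cast this
    have hnpk : npVal 6 (fun n => ordq (b n)) ((k:ℕ):ℝ) = (k:ℝ) * sq := by
      unfold npVal
      apply le_antisymm
      · refine csSup_le ⟨sq * ((k:ℕ):ℝ) + 0, sq, 0, hadm_sq, rfl⟩ ?_
        rintro y ⟨m, c, hadm, rfl⟩
        have h : ((m * ((k:ℕ):ℝ) + c : ℝ) : WithTop ℝ) ≤ ordq (b k) := hadm k hk7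
        rw [Pk] at h
        exact WithTop.coe_le_coe.1 h
      · have h := le_csSup (hbdd ((k:ℕ):ℝ) (by positivity) hk6R) ⟨sq, 0, hadm_sq, rfl⟩
        linarith
    set μ := (sq + s'q)/2 with hμ_def
    set m₀ := (3*sq + s'q)/4 with hm₀_def
    have hsm : sq < m₀ := by rw [hm₀_def]; linarith
    have hmμ : m₀ < μ := by rw [hm₀_def, hμ_def]; linarith
    have hμs' : μ < s'q := by rw [hμ_def]; linarith
    have hvertk : IsNPVertex 6 (fun n => ordq (b n)) k := by
      refine ⟨by omega, m₀, (k:ℝ)*sq - m₀*(k:ℝ), hadm_gen m₀ hsm.le (by linarith), ?_, ?_⟩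
      · rw [hnpk]; ring
      · intro j hj6 hjk
        have hj6R : (j:ℝ) ≤ 6 := by exact_mod_cast hj6
        rcases lt_or_gt_of_ne hjk with hjlt | hjgt
        · have hjkR : (j:ℝ) < (k:ℝ) := by exact_mod_cast hjlt
          have h2 : sq*(j:ℝ) + 0 ≤ npVal 6 (fun n => ordq (b n)) (j:ℝ) := by
            unfold npVal
            exact le_csSup (hbdd (j:ℝ) (by positivity) hj6R) ⟨sq, 0, hadm_sq, rfl⟩
          nlinarith [h2]
        · have hjkR : (k:ℝ) < (j:ℝ) := by exact_mod_cast hjgt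
          have h2 : μ*(j:ℝ) + ((k:ℝ)*sq - μ*(k:ℝ)) ≤ npVal 6 (fun n => ordq (b n)) (j:ℝ) := by
            unfold npVal
            exact le_csSup (hbdd (j:ℝ) (by positivity) hj6R)
              ⟨μ, (k:ℝ)*sq - μ*(k:ℝ), hadm_gen μ (by linarith) hμs'.le, rfl⟩
          nlinarith [h2]
    obtain ⟨z, hz⟩ := hvert k hvertk
    rw [hnpk] at hz
    have hkcase : k = 1 ∨ k = 2 ∨ k = 3 := by omega
    rcases hkcase with hkv | hkv | hkv
    · rw [hkv] at Pk hz
      rw [Pk] at hb1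
      have h1 := WithTop.coe_lt_coe.1 hb1
      push_cast at h1 hz
      have i1 : (1:ℤ) < z := by exact_mod_cast (show (1:ℝ) < (z:ℝ) by linarith)
      have i2 : (z:ℤ) < 2 := by exact_mod_cast (show ((z:ℤ):ℝ) < (2:ℝ) by linarith)
      omega
    · rw [hkv] at Pk hz
      rw [Pk] at hb2
      have h1 := WithTop.coe_lt_coe.1 hb2
      push_cast at h1 hz
      have i1 : (3:ℤ) < z := by exact_mod_cast (show (3:ℝ) < (z:ℝ) by linarith)
      have i2 : (z:ℤ) < 4 := by exact_mod_cast (show ((z:ℤ):ℝ) < (4:ℝ) by linarith)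
      omega
    · rw [hkv] at Pk hz
      rw [Pk] at hb3
      have h1 := WithTop.coe_lt_coe.1 hb3
      push_cast at h1 hz
      have i1 : (5:ℤ) < z := by exact_mod_cast (show (5:ℝ) < (z:ℝ) by linarith)
      have i2 : (z:ℤ) < 6 := by exact_mod_cast (show ((z:ℤ):ℝ) < (6:ℝ) by linarith)
      omega
  intro i
  have h1 : (a:ℝ)/2 ≤ u i := le_trans (by linarith) (hsv_le i)
  obtain ⟨j, hj⟩ := hmem i
  have h2 : u i ≤ (a:ℝ)/2 := by have := hsv_le j; rw [hj] at this; linarith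
  have hui : u i = (a:ℝ)/2 := le_antisymm h2 h1
  rw [hordq (α i), hu i, WithTop.map_coe]
  have : u i / (a:ℝ) = 1/2 := by rw [hui]; field_simp
  rw [this]
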